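/- For fixed γ > 0 and 0 < φ < 1, each entry of w^opt is strictly decreasing in φ, and as φ → 1⁻ each entry of w^opt tends to 0. -/
import Mathlib


open Matrix Filter

/-- The AR(1) precision tridiagonal matrix. -/
noncomputable def ar1Lambda (n : ℕ) (φ : ℝ) : Matrix (Fin n) (Fin n) ℝ :=
  Matrix.of fun i j =>
    if i = j then (if i.val = 0 ∨ i.val = n - 1 then (1 : ℝ) else 1 + φ ^ 2)
    else if i.val + 1 = j.val ∨ j.val + 1 = i.val then -φ else 0

/-! ### Auxiliary material -/

section Aux

/-- Strict minimum principle: if `A` has nonpositive off-diagonal entries and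
positive row sums, and `A *ᵥ x` is entrywise positive, then `x` is entrywise positive. -/
lemma minP_strict {n : ℕ} (A : Matrix (Fin n) (Fin n) ℝ)
    (hoff : ∀ i j, i ≠ j → A i j ≤ 0) (hrow : ∀ i, 0 < ∑ j, A i j)
    (x : Fin n → ℝ) (hx : ∀ i, 0 < (A *ᵥ x) i) : ∀ i, 0 < x i := by
  intro i
  obtain ⟨i0, -, hmin⟩ := Finset.univ.exists_min_image x ⟨i, Finset.mem_univ i⟩
  have h0 : 0 < x i0 := by
    by_contra h
    push_neg at h
    have key : (A *ᵥ x) i0 ≤ (∑ j, A i0 j) * x i0 := by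
      simp only [Matrix.mulVec, dotProduct]
      rw [Finset.sum_mul]
      refine Finset.sum_le_sum fun j _ => ?_
      rcases eq_or_ne j i0 with rfl | hj
      · exact le_rfl
      · exact mul_le_mul_of_nonpos_left (hmin j (Finset.mem_univ j)) (hoff i0 j hj.symm)
    have : (∑ j, A i0 j) * x i0 ≤ 0 := mul_nonpos_iff.2 (Or.inl ⟨(hrow i0).le, h⟩)
    linarith [hx i0]
  exact lt_of_lt_of_le h0 (hmin i (Finset.mem_univ i))

/-- Weak minimum principle. -/
lemma minP_weak {n : ℕ} (A : Matrix (Fin n) (Fin n) ℝ)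
    (hoff : ∀ i j, i ≠ j → A i j ≤ 0) (hrow : ∀ i, 0 < ∑ j, A i j)
    (x : Fin n → ℝ) (hx : ∀ i, 0 ≤ (A *ᵥ x) i) : ∀ i, 0 ≤ x i := by
  intro i
  obtain ⟨i0, -, hmin⟩ := Finset.univ.exists_min_image x ⟨i, Finset.mem_univ i⟩
  have h0 : 0 ≤ x i0 := by
    by_contra h
    push_neg at h
    have key : (A *ᵥ x) i0 ≤ (∑ j, A i0 j) * x i0 := by
      simp only [Matrix.mulVec, dotProduct]
      rw [Finset.sum_mul]
      refine Finset.sum_le_sum fun j _ => ?_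
      rcases eq_or_ne j i0 with rfl | hj
      · exact le_rfl
      · exact mul_le_mul_of_nonpos_left (hmin j (Finset.mem_univ j)) (hoff i0 j hj.symm)
    nlinarith [hx i0, hrow i0]
  exact le_trans h0 (hmin i (Finset.mem_univ i))

/-- A matrix with nonpositive off-diagonal entries and positive row sums is invertible. -/
lemma minP_unit {n : ℕ} (A : Matrix (Fin n) (Fin n) ℝ)
    (hoff : ∀ i j, i ≠ j → A i j ≤ 0) (hrow : ∀ i, 0 < ∑ j, A i j) :
    IsUnit A.det := by
  rw [isUnit_iff_ne_zero]
  intro hdet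
  obtain ⟨v, hv, hAv⟩ := (Matrix.exists_mulVec_eq_zero_iff).2 hdet
  have h1 : ∀ i, 0 ≤ v i :=
    minP_weak A hoff hrow v (fun i => by rw [hAv]; simp)
  have h2 : ∀ i, 0 ≤ (-v) i :=
    minP_weak A hoff hrow (-v) (fun i => by rw [Matrix.mulVec_neg, hAv]; simp)
  exact hv (funext fun i => le_antisymm (by simpa using h2 i) (h1 i))

lemma diag_mulVec_apply {n : ℕ} (d v : Fin n → ℝ) (i : Fin n) :
    (Matrix.diagonal d *ᵥ v) i = d i * v i := by
  simp [Matrix.mulVec, dotProduct, Matrix.diagonal_apply, Finset.sum_ite_eq]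

lemma mulVec_one_apply {n : ℕ} (A : Matrix (Fin n) (Fin n) ℝ) (i : Fin n) :
    (A *ᵥ (1 : Fin n → ℝ)) i = ∑ j, A i j := by
  simp [Matrix.mulVec, dotProduct]

lemma ar1_decomp (n : ℕ) (φ : ℝ) (i j : Fin n) :
    ar1Lambda n φ i j =
      (if j = i then (if i.val = 0 ∨ i.val = n - 1 then (1 : ℝ) else 1 + φ ^ 2) else 0)
      + (if j.val = i.val + 1 then -φ else 0)
      + (if j.val + 1 = i.val then -φ else 0) := by
  simp only [ar1Lambda, Matrix.of_apply]
  rcases eq_or_ne i j with rfl | h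
  · rw [if_pos rfl, if_pos rfl, if_neg (show ¬(i.val = i.val + 1) by omega),
      if_neg (show ¬(i.val + 1 = i.val) by omega)]
    ring
  · have hval : i.val ≠ j.val := fun hv => h (Fin.ext hv)
    rw [if_neg h, if_neg (fun hji : j = i => h hji.symm)]
    split_ifs <;> first | ring1 | (exfalso; omega)

lemma ar1_rowsum (n : ℕ) (hn : 2 ≤ n) (φ : ℝ) (i : Fin n) :
    ∑ j, ar1Lambda n φ i j =
      if i.val = 0 ∨ i.val = n - 1 then 1 - φ else 1 - 2*φ + φ^2 := by
  have hi := i.isLt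
  have S1 : (∑ j : Fin n, if j = i then (if i.val = 0 ∨ i.val = n - 1 then (1:ℝ) else 1 + φ ^ 2) else 0)
      = (if i.val = 0 ∨ i.val = n - 1 then (1:ℝ) else 1 + φ ^ 2) := by
    rw [Finset.sum_ite_eq' Finset.univ i, if_pos (Finset.mem_univ i)]
  have S2 : (∑ j : Fin n, if (j:ℕ) = i.val + 1 then (-φ:ℝ) else 0)
      = if i.val = n - 1 then 0 else -φ := by
    by_cases h : i.val = n - 1
    · rw [if_pos h]
      exact Finset.sum_eq_zero fun j _ => if_neg (by have := j.isLt; omega)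
    · rw [if_neg h]
      have hk : i.val + 1 < n := by omega
      have e : ∀ j : Fin n, (if (j:ℕ) = i.val + 1 then (-φ:ℝ) else 0)
          = (if j = ⟨i.val+1, hk⟩ then -φ else 0) :=
        fun j => if_congr (by simp only [Fin.ext_iff]; try omega) rfl rfl
      rw [Finset.sum_congr rfl fun j _ => e j, Finset.sum_ite_eq' Finset.univ,
        if_pos (Finset.mem_univ _)]
  have S3 : (∑ j : Fin n, if (j:ℕ) + 1 = i.val then (-φ:ℝ) else 0)
      = if i.val = 0 then 0 else -φ := by
    by_cases h : i.val = 0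
    · rw [if_pos h]
      exact Finset.sum_eq_zero fun j _ => if_neg (by omega)
    · rw [if_neg h]
      have hk : i.val - 1 < n := by omega
      have e : ∀ j : Fin n, (if (j:ℕ) + 1 = i.val then (-φ:ℝ) else 0)
          = (if j = ⟨i.val-1, hk⟩ then -φ else 0) :=
        fun j => if_congr (by simp only [Fin.ext_iff]; try omega) rfl rfl
      rw [Finset.sum_congr rfl fun j _ => e j, Finset.sum_ite_eq' Finset.univ,
        if_pos (Finset.mem_univ _)]
  rw [Finset.sum_congr rfl fun j _ => ar1_decomp n φ i j,
    Finset.sum_add_distrib, Finset.sum_add_distrib, S1, S2, S3]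
  split_ifs <;> first | ring1 | (exfalso; omega)

lemma ar1_offdiag (n : ℕ) (φ : ℝ) (hφ : 0 ≤ φ) (i j : Fin n) (h : i ≠ j) :
    ar1Lambda n φ i j ≤ 0 := by
  simp only [ar1Lambda, Matrix.of_apply, if_neg h]
  split_ifs <;> linarith

/-- The matrix `γ I + Λ(φ)`. -/
noncomputable def Am (n : ℕ) (γ φ : ℝ) : Matrix (Fin n) (Fin n) ℝ :=
  γ • 1 + ar1Lambda n φ

lemma Am_offdiag (n : ℕ) (γ φ : ℝ) (hφ : 0 ≤ φ) (i j : Fin n) (h : i ≠ j) :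
    Am n γ φ i j ≤ 0 := by
  simp only [Am, Matrix.add_apply, Matrix.smul_apply, Matrix.one_apply, if_neg h,
    smul_eq_mul, mul_zero, zero_add]
  exact ar1_offdiag n φ hφ i j h

lemma Am_rowsum (n : ℕ) (hn : 2 ≤ n) (γ φ : ℝ) (i : Fin n) :
    ∑ j, Am n γ φ i j
      = γ + (if i.val = 0 ∨ i.val = n - 1 then 1 - φ else 1 - 2*φ + φ^2) := by
  simp only [Am, Matrix.add_apply, Finset.sum_add_distrib, ar1_rowsum n hn φ i]
  congr 1
  simp [Matrix.smul_apply, Matrix.one_apply, mul_ite, mul_one, mul_zero, Finset.sum_ite_eq]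

lemma Am_rowsum_pos (n : ℕ) (hn : 2 ≤ n) (γ φ : ℝ) (hγ : 0 < γ) (hφ0 : 0 < φ)
    (hφ1 : φ < 1) (i : Fin n) : 0 < ∑ j, Am n γ φ i j := by
  rw [Am_rowsum n hn γ φ i]
  split_ifs <;> nlinarith

lemma ar1_rowsum_pos (n : ℕ) (hn : 2 ≤ n) (φ : ℝ) (hφ0 : 0 < φ) (hφ1 : φ < 1) (i : Fin n) :
    0 < ∑ j, ar1Lambda n φ i j := by
  rw [ar1_rowsum n hn φ i]
  split_ifs <;> nlinarith

lemma Am_unit (n : ℕ) (hn : 2 ≤ n) (γ φ : ℝ) (hγ : 0 < γ) (hφ0 : 0 < φ) (hφ1 : φ < 1) :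
    IsUnit (Am n γ φ).det :=
  minP_unit _ (Am_offdiag n γ φ hφ0.le) (Am_rowsum_pos n hn γ φ hγ hφ0 hφ1)

lemma ar1_unit (n : ℕ) (hn : 2 ≤ n) (φ : ℝ) (hφ0 : 0 < φ) (hφ1 : φ < 1) :
    IsUnit (ar1Lambda n φ).det :=
  minP_unit _ (ar1_offdiag n φ hφ0.le) (ar1_rowsum_pos n hn φ hφ0 hφ1)

/-- The vector `z(φ) = (γ I + Λ(φ))⁻¹ 1`. -/
noncomputable def zv (n : ℕ) (γ φ : ℝ) : Fin n → ℝ := (Am n γ φ)⁻¹ *ᵥ 1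

lemma Am_mulVec_zv (n : ℕ) (hn : 2 ≤ n) (γ φ : ℝ) (hγ : 0 < γ) (hφ0 : 0 < φ) (hφ1 : φ < 1) :
    Am n γ φ *ᵥ zv n γ φ = 1 := by
  rw [zv, Matrix.mulVec_mulVec, Matrix.mul_nonsing_inv _ (Am_unit n hn γ φ hγ hφ0 hφ1),
    Matrix.one_mulVec]

/-- Lower bound for `z`: `z_t > 1/(1+γ-s)` for any `s < φ`. -/
lemma zv_lb (n : ℕ) (hn : 2 ≤ n) (γ φ : ℝ) (hγ : 0 < γ) (hφ0 : 0 < φ) (hφ1 : φ < 1)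
    (s : ℝ) (hs : s < φ) (t : Fin n) : 1 < (1 + γ - s) * zv n γ φ t := by
  set x : Fin n → ℝ := (1 + γ - s) • zv n γ φ - 1 with hx
  have hAx : ∀ i, 0 < (Am n γ φ *ᵥ x) i := by
    intro i
    rw [hx, Matrix.mulVec_sub, Matrix.mulVec_smul, Am_mulVec_zv n hn γ φ hγ hφ0 hφ1]
    have : ((1 + γ - s) • (1 : Fin n → ℝ) - Am n γ φ *ᵥ 1) i
        = (1 + γ - s) - ∑ j, Am n γ φ i j := by
      simp [mulVec_one_apply]
    rw [this, Am_rowsum n hn γ φ i]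
    split_ifs <;> nlinarith
  have := minP_strict (Am n γ φ) (Am_offdiag n γ φ hφ0.le)
    (Am_rowsum_pos n hn γ φ hγ hφ0 hφ1) x hAx t
  have hxt : x t = (1 + γ - s) * zv n γ φ t - 1 := by simp [hx]
  linarith [hxt ▸ this]

lemma zv_pos (n : ℕ) (hn : 2 ≤ n) (γ φ : ℝ) (hγ : 0 < γ) (hφ0 : 0 < φ) (hφ1 : φ < 1)
    (t : Fin n) : 0 < zv n γ φ t := by
  have := zv_lb n hn γ φ hγ hφ0 hφ1 0 hφ0 t
  nlinarith

/-- The key matrix identity used for monotonicity. -/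
lemma ar1_diff (n : ℕ) (γ φ1 φ2 : ℝ) (h1 : 0 < φ1) :
    ar1Lambda n φ1 - ar1Lambda n φ2 =
      ((φ1 - φ2)/φ1) • (Am n γ φ1 - (1 + γ - φ1*φ2) • 1)
        + Matrix.diagonal (fun i : Fin n =>
            if i.val = 0 ∨ i.val = n - 1 then φ2*(φ2 - φ1) else 0) := by
  have h1' : φ1 ≠ 0 := ne_of_gt h1
  ext i j
  simp only [ar1Lambda, Am, Matrix.sub_apply, Matrix.add_apply, Matrix.smul_apply,
    Matrix.one_apply, Matrix.diagonal_apply, Matrix.of_apply, smul_eq_mul]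
  split_ifs <;> field_simp <;> ring

lemma zv_mono (n : ℕ) (hn : 2 ≤ n) (γ : ℝ) (hγ : 0 < γ) {φ1 φ2 : ℝ}
    (h1 : φ1 ∈ Set.Ioo (0:ℝ) 1) (h2 : φ2 ∈ Set.Ioo (0:ℝ) 1) (h12 : φ1 < φ2) (t : Fin n) :
    zv n γ φ1 t < zv n γ φ2 t := by
  obtain ⟨h10, h11⟩ := h1
  obtain ⟨h20, h21⟩ := h2
  set a : ℝ := (φ1 - φ2)/φ1 with ha
  set β : ℝ := 1 + γ - φ1*φ2 with hβ
  set d : Fin n → ℝ := fun i => if i.val = 0 ∨ i.val = n - 1 then φ2*(φ2 - φ1) else 0 with hd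
  set x : Fin n → ℝ := zv n γ φ2 - zv n γ φ1 with hx
  have hAmdiff : Am n γ φ1 - Am n γ φ2 = ar1Lambda n φ1 - ar1Lambda n φ2 := by
    simp only [Am]
    exact add_sub_add_left_eq_sub _ _ _
  have hAx : Am n γ φ2 *ᵥ x
      = (a • (Am n γ φ1 - β • 1) + Matrix.diagonal d) *ᵥ zv n γ φ1 := by
    rw [hx, Matrix.mulVec_sub, Am_mulVec_zv n hn γ φ2 hγ h20 h21,
      ← Am_mulVec_zv n hn γ φ1 hγ h10 h11, ← Matrix.sub_mulVec, hAmdiff,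
      ar1_diff n γ φ1 φ2 h10]
  have hAxpos : ∀ i, 0 < (Am n γ φ2 *ᵥ x) i := by
    intro i
    rw [hAx]
    have expand : ((a • (Am n γ φ1 - β • 1) + Matrix.diagonal d) *ᵥ zv n γ φ1) i
        = a * (1 - β * zv n γ φ1 i) + d i * zv n γ φ1 i := by
      rw [Matrix.add_mulVec, Matrix.smul_mulVec, Matrix.sub_mulVec,
        Am_mulVec_zv n hn γ φ1 hγ h10 h11, Matrix.smul_mulVec, Matrix.one_mulVec]
      simp [diag_mulVec_apply]
      try ring
    rw [expand]
    have ha0 : a < 0 := div_neg_of_neg_of_pos (by linarith) h10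
    have hbz : 1 - β * zv n γ φ1 i < 0 := by
      have hs : φ1 * φ2 < φ1 := by nlinarith
      have := zv_lb n hn γ φ1 hγ h10 h11 (φ1*φ2) hs i
      rw [hβ]; linarith
    have hdz : 0 ≤ d i * zv n γ φ1 i := by
      apply mul_nonneg
      · rw [hd]; dsimp only; split_ifs <;> nlinarith
      · exact (zv_pos n hn γ φ1 hγ h10 h11 i).le
    nlinarith [mul_pos_of_neg_of_neg ha0 hbz]
  have := minP_strict (Am n γ φ2) (Am_offdiag n γ φ2 h20.le)
    (Am_rowsum_pos n hn γ φ2 hγ h20 h21) x hAxpos t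
  have hxt : x t = zv n γ φ2 t - zv n γ φ1 t := by simp [hx]
  linarith [hxt ▸ this]

/-- The closed formula `w(φ) = 1 - γ z(φ)` entrywise. -/
lemma w_eq (n : ℕ) (hn : 2 ≤ n) (γ φ : ℝ) (hγ : 0 < γ) (hφ0 : 0 < φ) (hφ1 : φ < 1) :
    (γ • (ar1Lambda n φ)⁻¹ + 1)⁻¹ *ᵥ (1 : Fin n → ℝ)
      = fun t => 1 - γ * zv n γ φ t := by
  have hΛ := ar1_unit n hn φ hφ0 hφ1
  have hA := Am_unit n hn γ φ hγ hφ0 hφ1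
  have key : γ • (ar1Lambda n φ)⁻¹ + 1 = (ar1Lambda n φ)⁻¹ * Am n γ φ := by
    rw [Am, Matrix.mul_add, Matrix.mul_smul, Matrix.mul_one,
      Matrix.nonsing_inv_mul _ hΛ]
  have hΛeq : ar1Lambda n φ = Am n γ φ - γ • 1 := by
    rw [Am, add_sub_cancel_left]
  rw [key, Matrix.mul_inv_rev, Matrix.nonsing_inv_nonsing_inv _ hΛ, ← Matrix.mulVec_mulVec,
    hΛeq, Matrix.sub_mulVec, Matrix.mulVec_sub, Matrix.mulVec_mulVec,
    Matrix.nonsing_inv_mul _ hA, Matrix.one_mulVec, Matrix.smul_mulVec,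
    Matrix.mulVec_smul]
  funext t
  simp [zv]
  try ring

/-- Nonnegativity of `w`. -/
lemma w_nonneg (n : ℕ) (hn : 2 ≤ n) (γ φ : ℝ) (hγ : 0 < γ) (hφ0 : 0 < φ) (hφ1 : φ < 1)
    (t : Fin n) : 0 ≤ 1 - γ * zv n γ φ t := by
  set x : Fin n → ℝ := 1 - γ • zv n γ φ with hx
  have hAx : ∀ i, 0 ≤ (Am n γ φ *ᵥ x) i := by
    intro i
    rw [hx, Matrix.mulVec_sub, Matrix.mulVec_smul, Am_mulVec_zv n hn γ φ hγ hφ0 hφ1]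
    have : ((Am n γ φ *ᵥ 1) - γ • (1 : Fin n → ℝ)) i = (∑ j, Am n γ φ i j) - γ := by
      simp [mulVec_one_apply]
    rw [this, Am_rowsum n hn γ φ i]
    split_ifs <;> nlinarith
  have := minP_weak (Am n γ φ) (Am_offdiag n γ φ hφ0.le)
    (Am_rowsum_pos n hn γ φ hγ hφ0 hφ1) x hAx t
  have hxt : x t = 1 - γ * zv n γ φ t := by simp [hx]
  linarith [hxt ▸ this]

end Aux

/-- for fixed `γ > 0`, writing `w^opt(φ) = (γ Λ(φ)⁻¹ + I)⁻¹ 1`,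
each entry of `w^opt` is strictly decreasing in `φ` on `(0,1)`, and as `φ → 1⁻`
each entry tends to `0`. -/
theorem stmt_14 (n : ℕ) (hn : 2 ≤ n) (γ : ℝ) (hγ : 0 < γ)
    (w : ℝ → Fin n → ℝ)
    (hw : ∀ φ : ℝ, w φ = (γ • (ar1Lambda n φ)⁻¹ + 1)⁻¹ *ᵥ (1 : Fin n → ℝ)) :
    (∀ t : Fin n, StrictAntiOn (fun φ => w φ t) (Set.Ioo (0 : ℝ) 1)) ∧
    (∀ t : Fin n,
      Tendsto (fun φ => w φ t) (nhdsWithin 1 (Set.Iio (1 : ℝ))) (nhds 0)) := by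
  have hkey : ∀ φ ∈ Set.Ioo (0:ℝ) 1, ∀ t : Fin n, w φ t = 1 - γ * zv n γ φ t := by
    intro φ hφ t
    rw [hw φ, w_eq n hn γ φ hγ hφ.1 hφ.2]
  constructor
  · intro t φ1 h1 φ2 h2 h12
    have hz := zv_mono n hn γ hγ h1 h2 h12 t
    have e1 := hkey φ1 h1 t
    have e2 := hkey φ2 h2 t
    simp only
    rw [e1, e2]
    nlinarith
  · intro t
    have hev : Set.Ioo (0:ℝ) 1 ∈ nhdsWithin (1:ℝ) (Set.Iio 1) :=
      Ioo_mem_nhdsLT_of_mem (by constructor <;> norm_num)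
    have h0 : ∀ᶠ φ in nhdsWithin (1:ℝ) (Set.Iio 1), 0 ≤ w φ t := by
      filter_upwards [hev] with φ hφ
      rw [hkey φ hφ t]
      exact w_nonneg n hn γ φ hγ hφ.1 hφ.2 t
    have h1 : ∀ᶠ φ in nhdsWithin (1:ℝ) (Set.Iio 1),
        w φ t ≤ (1 - φ^2)/(1 + γ - φ^2) := by
      filter_upwards [hev] with φ hφ
      rw [hkey φ hφ t]
      have hD : 0 < 1 + γ - φ^2 := by nlinarith [hφ.1, hφ.2]
      rw [le_div_iff₀ hD]
      have hlb := zv_lb n hn γ φ hγ hφ.1 hφ.2 (φ^2) (by nlinarith [hφ.1, hφ.2]) t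
      nlinarith [mul_lt_mul_of_pos_left hlb hγ]
    have hg : Tendsto (fun φ : ℝ => (1 - φ^2)/(1 + γ - φ^2))
        (nhdsWithin (1:ℝ) (Set.Iio 1)) (nhds 0) := by
      have hc : ContinuousAt (fun φ : ℝ => (1 - φ^2)/(1 + γ - φ^2)) 1 := by
        apply ContinuousAt.div (by fun_prop) (by fun_prop)
        norm_num
        linarith
      have := hc.tendsto
      norm_num at this
      exact this.mono_left nhdsWithin_le_nhds
    exact squeeze_zero' h0 h1 hg
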